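/- Let β be a type with decidable equality, key : γ → β, and l : List γ. Let vs := (l.map key).foldr (fun x xs => x :: xs.filter (fun y => y ≠ x)) [] be the list of distinct key values of l in order of first occurrence, and let Gs := vs.map (fun v => l.filter (fun z => key z = v)) be the corresponding groups. Then: (i) vs has no duplicates (vs.Nodup); (ii) every group G ∈ Gs is nonempty; (iii) the concatenation Gs.flatten is a permutation of l; and (iv) for each index i < vs.length, every element z of the i-th group of Gs satisfies key z = the i-th element of vs. -/

import Mathlib

private def dd {β : Type*} [DecidableEq β] (m : List β) : List β :=
  m.foldr (fun x xs => x :: xs.filter (fun y => decide (y ≠ x))) []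

private lemma mem_dd {β : Type*} [DecidableEq β] (m : List β) (a : β) :
    a ∈ dd m ↔ a ∈ m := by
  induction m with
  | nil => simp [dd]
  | cons x m ih =>
    simp only [dd, List.foldr_cons, List.mem_cons, List.mem_filter] at *
    simp only [decide_not] at ih ⊢
    by_cases h : a = x <;> simp [h, List.mem_filter, ih]

private lemma nodup_dd {β : Type*} [DecidableEq β] (m : List β) : (dd m).Nodup := by
  induction m with
  | nil => simp [dd]
  | cons x m ih =>
    simp only [dd, List.foldr_cons] at *
    refine List.Nodup.cons ?_ (ih.filter _)
    intro h
    have := (List.mem_filter.mp h).2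
    simp at this

private lemma flatten_perm {β γ : Type*} [DecidableEq β] (key : γ → β) (l : List γ)
    (vs : List β) (hnd : vs.Nodup) :
    (vs.map (fun v => l.filter (fun z => decide (key z = v)))).flatten.Perm
      (l.filter (fun z => decide (key z ∈ vs))) := by
  induction vs with
  | nil => simp
  | cons v vs ih =>
    have hnv : v ∉ vs := (List.nodup_cons.mp hnd).1
    have ih' := ih (List.nodup_cons.mp hnd).2
    simp only [List.map_cons, List.flatten_cons]
    have hperm := List.filter_append_perm (fun z => decide (key z = v))
      (l.filter (fun z => decide (key z ∈ v :: vs)))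
    rw [List.filter_filter, List.filter_filter] at hperm
    have h1 : ∀ z : γ, (decide (key z = v) && decide (key z ∈ v :: vs)) = decide (key z = v) := by
      intro z; by_cases h : key z = v <;> simp [h]
    have h2 : ∀ z : γ, (!decide (key z = v) && decide (key z ∈ v :: vs)) = decide (key z ∈ vs) := by
      intro z
      by_cases h : key z = v
      · simp [h]; intro hm; exact absurd (h ▸ hm) hnv
      · simp [h]
    rw [List.filter_congr (fun z _ => h1 z), List.filter_congr (fun z _ => h2 z)] at hperm
    exact (List.Perm.append_left _ ih').trans hperm

/-- Correctness of the paper's `GROUP BY` partition: the distinct key values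
`vs` (first-occurrence deduplication of the key values of `l`) have no
duplicates, each induced group is nonempty, the groups together form a
permutation of the input relation, and every element of the `i`-th group has
the `i`-th key value. -/
theorem groupBy_partition {β γ : Type*} [DecidableEq β] (key : γ → β) (l : List γ)
    (vs : List β) (Gs : List (List γ))
    (hvs : vs = (l.map key).foldr (fun x xs => x :: xs.filter (fun y => decide (y ≠ x))) [])
    (hGs : Gs = vs.map (fun v => l.filter (fun z => decide (key z = v)))) :
    vs.Nodup ∧
    (∀ G ∈ Gs, G ≠ []) ∧
    Gs.flatten.Perm l ∧
    ∀ i (hi : i < vs.length) (hg : i < Gs.length), ∀ z ∈ Gs[i], key z = vs[i] := by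
  have hvs' : vs = dd (l.map key) := hvs
  have hmem : ∀ b, b ∈ vs ↔ b ∈ l.map key := by
    intro b; rw [hvs']; exact mem_dd _ b
  have hnd : vs.Nodup := hvs' ▸ nodup_dd _
  refine ⟨hnd, ?_, ?_, ?_⟩
  · intro G hG
    rw [hGs, List.mem_map] at hG
    obtain ⟨v, hv, rfl⟩ := hG
    obtain ⟨z, hz, hkz⟩ := List.mem_map.mp ((hmem v).mp hv)
    intro h
    have : z ∈ l.filter (fun z => decide (key z = v)) := by
      simp [List.mem_filter, hz, hkz]
    rw [h] at this; exact absurd this (List.not_mem_nil (a := z))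
  · rw [hGs]
    have := flatten_perm key l vs hnd
    have hself : l.filter (fun z => decide (key z ∈ vs)) = l := by
      rw [List.filter_eq_self]
      intro z hz
      simp only [decide_eq_true_eq]
      exact (hmem _).mpr (List.mem_map_of_mem (f := key) hz)
    rwa [hself] at this
  · intro i hi hg z hz
    subst hGs
    simp only [List.getElem_map] at hz
    exact of_decide_eq_true (List.mem_filter.mp hz).2
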